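/- Let Y be a real random variable with mean 0 and variance 1, Z an independent standard Gaussian, and W_t = √(1-t²)Y + tZ. Suppose k ≥ 3 is the smallest index with |M_k(Y) - M_k(Z)| ≥ D. Then |M_k(W_t) - M_k(Z)| ≥ D((1-t²)^{k/2} - t(1-t²)^{3/2}(1+√(k-3))^k), and in particular for k = 3, |M_3(W_t) - M_3(Z)| ≥ D(1-t²)^{3/2}. -/

import Mathlib

open MeasureTheory ProbabilityTheory Real Finset
open scoped NNReal ENNReal

noncomputable def gmom (m : ℕ) : ℝ :=
  if Even m then (Nat.factorial m : ℝ) / (2 ^ (m / 2) * Nat.factorial (m / 2)) else 0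

lemma gmom_zero : gmom 0 = 1 := by simp [gmom]
lemma gmom_one : gmom 1 = 0 := by simp [gmom]
lemma gmom_odd {m : ℕ} (h : ¬ Even m) : gmom m = 0 := by simp [gmom, h]
lemma gmom_two_mul (i : ℕ) :
    gmom (2 * i) = (Nat.factorial (2 * i) : ℝ) / (2 ^ i * Nat.factorial i) := by
  simp [gmom, even_two_mul i, Nat.mul_div_cancel_left i (by norm_num : 0 < 2)]

lemma gmom_nonneg (m : ℕ) : 0 ≤ gmom m := by
  unfold gmom; split
  · positivity
  · exact le_refl 0

lemma gmom_rec (m : ℕ) : gmom (m + 2) = (m + 1) * gmom m := by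
  rcases Nat.even_or_odd m with he | ho
  · obtain ⟨i, rfl⟩ := he
    have h1 : i + i = 2 * i := by ring
    have h2 : 2 * i + 2 = 2 * (i + 1) := by ring
    rw [h1, h2, gmom_two_mul, gmom_two_mul]
    have e1 : Nat.factorial (2 * (i + 1)) = (2*i+2) * ((2*i+1) * Nat.factorial (2*i)) := by
      rw [show 2 * (i+1) = (2*i+1)+1 by ring, Nat.factorial_succ,
        show 2*i+1 = (2*i)+1 by ring, Nat.factorial_succ]
    have e2 : Nat.factorial (i + 1) = (i+1) * Nat.factorial i := Nat.factorial_succ i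
    rw [e1, e2]
    have hf : (Nat.factorial i : ℝ) ≠ 0 := Nat.cast_ne_zero.2 (Nat.factorial_ne_zero i)
    have hi : ((i:ℝ)+1) ≠ 0 := by positivity
    push_cast
    field_simp
    ring
  · have h1 : ¬ Even m := Nat.not_even_iff_odd.mpr ho
    have h2 : ¬ Even (m + 2) := by
      simpa [Nat.even_add] using h1
    rw [gmom_odd h1, gmom_odd h2, mul_zero]

lemma gmom_le {c : ℝ} (hc : 0 ≤ c) : ∀ m : ℕ, (m : ℝ) ≤ c → gmom m ≤ Real.sqrt c ^ m := by
  intro m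
  induction m using Nat.twoStepInduction with
  | zero => intro _; simp [gmom_zero]
  | one => intro _; simp [gmom_one, Real.sqrt_nonneg]
  | more m ih _ =>
    intro hm
    have hm' : (m : ℝ) ≤ c := by push_cast at hm ⊢; linarith
    have h1 : (m : ℝ) + 1 ≤ c := by push_cast at hm ⊢; linarith
    calc gmom (m + 2) = ((m : ℝ) + 1) * gmom m := by rw [gmom_rec]
    _ ≤ c * Real.sqrt c ^ m := by
        apply mul_le_mul h1 (ih hm') (gmom_nonneg m) hc
    _ = Real.sqrt c ^ (m + 2) := by
        rw [pow_add, Real.sq_sqrt hc]; ring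

lemma sum_even_vanish (n : ℕ) (f : ℕ → ℝ) (hf : ∀ j, ¬ Even j → f j = 0) :
    ∑ j ∈ range (2 * n + 1), f j = ∑ i ∈ range (n + 1), f (2 * i) := by
  induction n with
  | zero => simp
  | succ n ih =>
    rw [show 2 * (n + 1) + 1 = (2 * n + 1) + 1 + 1 by ring, sum_range_succ, sum_range_succ, ih,
      sum_range_succ, hf (2 * n + 1) (by simp [Nat.even_add_one, parity_simps]),
      show 2 * n + 1 + 1 = 2 * (n + 1) by ring, sum_range_succ, sum_range_succ]
    ring

lemma term_id (i m : ℕ) :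
    ((Nat.choose (2 * (i + m)) (2 * i) : ℝ)) * gmom (2 * i) * gmom (2 * m)
      = gmom (2 * (i + m)) * (Nat.choose (i + m) i : ℝ) := by
  rw [gmom_two_mul, gmom_two_mul, gmom_two_mul,
    Nat.cast_choose ℝ (by omega : 2 * i ≤ 2 * (i + m)),
    Nat.cast_choose ℝ (by omega : i ≤ i + m),
    show 2 * (i + m) - 2 * i = 2 * m by omega, show i + m - i = m by omega]
  have h1 : (Nat.factorial (2 * i) : ℝ) ≠ 0 := Nat.cast_ne_zero.2 (Nat.factorial_ne_zero _)
  have h2 : (Nat.factorial (2 * m) : ℝ) ≠ 0 := Nat.cast_ne_zero.2 (Nat.factorial_ne_zero _)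
  have h3 : (Nat.factorial i : ℝ) ≠ 0 := Nat.cast_ne_zero.2 (Nat.factorial_ne_zero _)
  have h4 : (Nat.factorial m : ℝ) ≠ 0 := Nat.cast_ne_zero.2 (Nat.factorial_ne_zero _)
  have h5 : (Nat.factorial (i + m) : ℝ) ≠ 0 := Nat.cast_ne_zero.2 (Nat.factorial_ne_zero _)
  field_simp
  ring

lemma gmom_identity (k : ℕ) {s t : ℝ} (hst : s ^ 2 + t ^ 2 = 1) :
    ∑ j ∈ range (k + 1), (k.choose j : ℝ) * s ^ j * t ^ (k - j) * gmom j * gmom (k - j)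
      = gmom k := by
  rcases Nat.even_or_odd k with ⟨n, hn⟩ | hodd
  · have hk : k = 2 * n := by omega
    subst hk
    rw [sum_even_vanish n _ (fun j hj => by rw [gmom_odd hj]; ring)]
    have hcongr : ∀ i ∈ range (n + 1),
        ((2 * n).choose (2 * i) : ℝ) * s ^ (2 * i) * t ^ (2 * n - 2 * i) * gmom (2 * i)
            * gmom (2 * n - 2 * i)
          = gmom (2 * n) * ((n.choose i : ℝ) * (s ^ 2) ^ i * (t ^ 2) ^ (n - i)) := by
      intro i hi
      have hin : i ≤ n := by simpa using Nat.lt_succ_iff.mp (mem_range.mp hi)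
      have h1 : 2 * n - 2 * i = 2 * (n - i) := by omega
      have h2 : i + (n - i) = n := by omega
      have h3 := term_id i (n - i)
      rw [h2] at h3
      rw [h1, pow_mul s 2 i, pow_mul t 2 (n - i)]
      calc ((2 * n).choose (2 * i) : ℝ) * (s ^ 2) ^ i * (t ^ 2) ^ (n - i) * gmom (2 * i)
            * gmom (2 * (n - i))
          = (((2 * n).choose (2 * i) : ℝ) * gmom (2 * i) * gmom (2 * (n - i)))
            * ((s ^ 2) ^ i * (t ^ 2) ^ (n - i)) := by ring
        _ = gmom (2 * n) * ((n.choose i : ℝ) * (s ^ 2) ^ i * (t ^ 2) ^ (n - i)) := by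
            rw [h3]; ring
    rw [sum_congr rfl hcongr, ← mul_sum]
    have : ∑ i ∈ range (n + 1), (n.choose i : ℝ) * (s ^ 2) ^ i * (t ^ 2) ^ (n - i)
        = (s ^ 2 + t ^ 2) ^ n := by
      rw [add_pow]
      exact sum_congr rfl fun i _ => by ring
    rw [this, hst, one_pow, mul_one]
  · have hko : ¬ Even k := Nat.not_even_iff_odd.mpr hodd
    rw [gmom_odd hko]
    apply Finset.sum_eq_zero
    intro j hj
    have hjk : j ≤ k := Nat.lt_succ_iff.mp (mem_range.mp hj)
    by_cases hje : Even j
    · have : Odd (k - j) := Nat.Odd.sub_even hjk hodd hje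
      rw [gmom_odd (Nat.not_even_iff_odd.mpr this), mul_zero]
    · rw [gmom_odd hje]; ring

lemma integrable_xj_exp (j : ℕ) :
    Integrable (fun x : ℝ => x ^ j * Real.exp (-x ^ 2 / 2)) := by
  have h := integrable_rpow_mul_exp_neg_mul_sq (b := 1/2) (by norm_num)
    (s := (j : ℝ)) (lt_of_lt_of_le (by norm_num) (Nat.cast_nonneg j))
  have : (fun x : ℝ => x ^ (j : ℝ) * Real.exp (-(1/2) * x ^ 2))
      = fun x : ℝ => x ^ j * Real.exp (-x ^ 2 / 2) := by
    funext x
    rw [Real.rpow_natCast]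
    ring_nf
  rwa [this] at h

lemma hasDerivAt_xj_exp (j : ℕ) (x : ℝ) :
    HasDerivAt (fun x : ℝ => x ^ (j + 1) * Real.exp (-x ^ 2 / 2))
      (((j : ℝ) + 1) * (x ^ j * Real.exp (-x ^ 2 / 2)) - x ^ (j + 2) * Real.exp (-x ^ 2 / 2))
      x := by
  have h2 : HasDerivAt (fun x : ℝ => -x ^ 2 / 2) (-x) x := by
    have := ((hasDerivAt_pow 2 x).neg).div_const 2
    refine this.congr_deriv ?_
    push_cast
    ring
  have h3 : HasDerivAt (fun x : ℝ => Real.exp (-x ^ 2 / 2))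
      (Real.exp (-x ^ 2 / 2) * (-x)) x := (Real.hasDerivAt_exp _).comp x h2
  have h1 : HasDerivAt (fun x : ℝ => x ^ (j + 1)) (((j : ℝ) + 1) * x ^ j) x := by
    have := hasDerivAt_pow (j + 1) x
    simpa using this
  have := h1.mul h3
  refine this.congr_deriv ?_
  ring

lemma I_rec (j : ℕ) :
    ∫ x : ℝ, x ^ (j + 2) * Real.exp (-x ^ 2 / 2)
      = ((j : ℝ) + 1) * ∫ x : ℝ, x ^ j * Real.exp (-x ^ 2 / 2) := by
  have hzero := integral_eq_zero_of_hasDerivAt_of_integrable (hasDerivAt_xj_exp j)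
    (((integrable_xj_exp j).const_mul _).sub (integrable_xj_exp (j + 2)))
    (integrable_xj_exp (j + 1))
  rw [integral_sub ((integrable_xj_exp j).const_mul _) (integrable_xj_exp (j + 2)),
    integral_const_mul] at hzero
  linarith

lemma I_zero : ∫ x : ℝ, x ^ 0 * Real.exp (-x ^ 2 / 2) = Real.sqrt (2 * π) := by
  simp only [pow_zero, one_mul]
  have : (fun x : ℝ => Real.exp (-x ^ 2 / 2)) = fun x : ℝ => Real.exp (-(1/2) * x ^ 2) := by
    funext x; ring_nf
  rw [this, integral_gaussian, show π / (1/2 : ℝ) = 2 * π by ring]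

lemma I_one : ∫ x : ℝ, x ^ 1 * Real.exp (-x ^ 2 / 2) = 0 := by
  have h := integral_eq_zero_of_hasDerivAt_of_integrable (f' := fun x : ℝ =>
      x ^ 1 * Real.exp (-x ^ 2 / 2)) (f := fun x : ℝ => -Real.exp (-x ^ 2 / 2))
    (fun x => by
      have h2 : HasDerivAt (fun x : ℝ => -x ^ 2 / 2) (-x) x := by
        have := ((hasDerivAt_pow 2 x).neg).div_const 2
        refine this.congr_deriv ?_
        push_cast; ring
      have h3 := ((Real.hasDerivAt_exp (-x ^ 2 / 2)).comp x h2).neg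
      refine h3.congr_deriv ?_
      ring)
    (integrable_xj_exp 1)
    (by
      have h0 := (integrable_xj_exp 0).neg
      have he : (-fun x : ℝ => x ^ 0 * Real.exp (-x ^ 2 / 2))
          = fun x : ℝ => -Real.exp (-x ^ 2 / 2) := by funext x; simp
      rwa [he] at h0)
  exact h

lemma gauss_integral_eq (f : ℝ → ℝ) :
    ∫ x, f x ∂(gaussianReal 0 1) = ∫ x, gaussianPDFReal 0 1 x * f x := by
  rw [gaussianReal_of_var_ne_zero 0 one_ne_zero]
  have hmeas : AEMeasurable (fun x => Real.toNNReal (gaussianPDFReal 0 1 x))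
      (volume : Measure ℝ) :=
    (measurable_gaussianPDFReal 0 1).real_toNNReal.aemeasurable
  have hd : (gaussianPDF 0 1) = fun x => ((Real.toNNReal (gaussianPDFReal 0 1 x) : ℝ≥0) : ℝ≥0∞) :=
    rfl
  rw [hd, integral_withDensity_eq_integral_smul₀ hmeas f]
  congr 1
  funext x
  rw [NNReal.smul_def, smul_eq_mul, Real.coe_toNNReal _ (gaussianPDFReal_nonneg 0 1 x)]

lemma gaussianPDFReal_zero_one (x : ℝ) :
    gaussianPDFReal 0 1 x = (Real.sqrt (2 * π))⁻¹ * Real.exp (-x ^ 2 / 2) := by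
  rw [gaussianPDFReal]
  norm_num

lemma gauss_moment (j : ℕ) : ∫ x, x ^ j ∂(gaussianReal 0 1) = gmom j := by
  have key : ∀ m : ℕ, ∫ x, x ^ m ∂(gaussianReal 0 1)
      = (Real.sqrt (2 * π))⁻¹ * ∫ x : ℝ, x ^ m * Real.exp (-x ^ 2 / 2) := by
    intro m
    rw [gauss_integral_eq]
    simp_rw [gaussianPDFReal_zero_one]
    rw [← integral_const_mul]
    congr 1; funext x; ring
  have hpos : Real.sqrt (2 * π) ≠ 0 := by positivity
  induction j using Nat.twoStepInduction with
  | zero => rw [key, I_zero, gmom_zero, inv_mul_cancel₀ hpos]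
  | one => rw [key, I_one, gmom_one, mul_zero]
  | more m ih _ =>
    rw [key, I_rec, gmom_rec, ← mul_assoc, mul_comm _ ((m : ℝ) + 1), mul_assoc, ← key, ih]

lemma expand_indep {Ω : Type*} [MeasureSpace Ω] [IsProbabilityMeasure (ℙ : Measure Ω)]
    (A B : Ω → ℝ) (hAB : IndepFun A B ℙ) (a b : ℝ) (k : ℕ)
    (hA : ∀ j ≤ k, Integrable (fun ω => A ω ^ j)) (hB : ∀ j ≤ k, Integrable (fun ω => B ω ^ j)) :
    ∫ ω, (a * A ω + b * B ω) ^ k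
      = ∑ j ∈ range (k + 1), (k.choose j : ℝ) * a ^ j * b ^ (k - j)
          * (∫ ω, A ω ^ j) * (∫ ω, B ω ^ (k - j)) := by
  have hpt : (fun ω => (a * A ω + b * B ω) ^ k)
      = fun ω => ∑ j ∈ range (k + 1),
          ((k.choose j : ℝ) * a ^ j * b ^ (k - j)) * (A ω ^ j * B ω ^ (k - j)) := by
    funext ω
    rw [add_pow]
    exact sum_congr rfl fun j _ => by ring
  have hind : ∀ j : ℕ, IndepFun (fun ω => A ω ^ j) (fun ω => B ω ^ (k - j)) ℙ :=
    fun j => hAB.comp (measurable_id.pow_const j) (measurable_id.pow_const (k - j))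
  have hint : ∀ j ∈ range (k + 1),
      Integrable (fun ω => ((k.choose j : ℝ) * a ^ j * b ^ (k - j))
        * (A ω ^ j * B ω ^ (k - j))) := by
    intro j hj
    have hjk : j ≤ k := Nat.lt_succ_iff.mp (mem_range.mp hj)
    exact ((hind j).integrable_mul (hA j hjk) (hB (k - j) (Nat.sub_le k j))).const_mul _
  rw [hpt, integral_finset_sum _ hint]
  refine sum_congr rfl fun j hj => ?_
  have hjk : j ≤ k := Nat.lt_succ_iff.mp (mem_range.mp hj)
  rw [integral_const_mul, (hind j).integral_fun_mul_eq_mul_integral (hA j hjk).1 (hB (k - j) (Nat.sub_le k j)).1]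
  ring

lemma rpow_half_nat {x : ℝ} (hx : 0 ≤ x) (n : ℕ) :
    x ^ ((n : ℝ) / 2) = Real.sqrt x ^ n := by
  rw [show (n : ℝ) / 2 = (1 / 2) * n by ring, Real.rpow_mul hx, Real.rpow_natCast,
    Real.sqrt_eq_rpow]

/-- Moment perturbation bound: if `Y` has mean 0 and variance 1, `Z` is an independent
standard Gaussian, `W_t = √(1-t²)Y + tZ`, and `k ≥ 3` is the smallest index with
`|M_k(Y) - M_k(Z)| ≥ D`, then
`|M_k(W_t) - M_k(Z)| ≥ D((1-t²)^{k/2} - t(1-t²)^{3/2}(1+√(k-3))^k)`;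
in particular for `k = 3`, `|M_3(W_t) - M_3(Z)| ≥ D(1-t²)^{3/2}`. -/
theorem moment_perturbation
    {Ω : Type*} [MeasureSpace Ω] [IsProbabilityMeasure (ℙ : Measure Ω)]
    (Y Z : Ω → ℝ) (t D : ℝ) (ht : t ∈ Set.Icc (0 : ℝ) 1) (hD : 0 < D) (k : ℕ) (hk : 3 ≤ k)
    (hZ : Measure.map Z ℙ = gaussianReal 0 1)
    (hindep : IndepFun Y Z ℙ)
    (hmean : ∫ ω, Y ω = 0) (hvar : ∫ ω, Y ω ^ 2 = 1)
    (hYint : ∀ j ≤ k, Integrable (fun ω => Y ω ^ j))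
    (hZint : ∀ j ≤ k, Integrable (fun ω => Z ω ^ j))
    (hWint : Integrable (fun ω => (Real.sqrt (1 - t ^ 2) * Y ω + t * Z ω) ^ k))
    (hgap : |(∫ ω, Y ω ^ k) - (∫ x, x ^ k ∂(gaussianReal 0 1))| ≥ D)
    (hmin : ∀ j < k, |(∫ ω, Y ω ^ j) - (∫ x, x ^ j ∂(gaussianReal 0 1))| < D) :
    |(∫ ω, (Real.sqrt (1 - t ^ 2) * Y ω + t * Z ω) ^ k) - (∫ x, x ^ k ∂(gaussianReal 0 1))|
      ≥ D * ((1 - t ^ 2) ^ ((k : ℝ) / 2)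
              - t * (1 - t ^ 2) ^ ((3 : ℝ) / 2) * (1 + Real.sqrt ((k : ℝ) - 3)) ^ k)
    ∧ (k = 3 →
        |(∫ ω, (Real.sqrt (1 - t ^ 2) * Y ω + t * Z ω) ^ 3) - (∫ x, x ^ 3 ∂(gaussianReal 0 1))|
          ≥ D * (1 - t ^ 2) ^ ((3 : ℝ) / 2)) := by
  obtain ⟨ht0, ht1⟩ := ht
  set s : ℝ := Real.sqrt (1 - t ^ 2) with hs_def
  have h1t : (0 : ℝ) ≤ 1 - t ^ 2 := by nlinarith
  have hs2 : s ^ 2 = 1 - t ^ 2 := Real.sq_sqrt h1t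
  have hs0 : 0 ≤ s := Real.sqrt_nonneg _
  have hs1 : s ≤ 1 := by nlinarith
  -- moments of Z
  have haeZ : AEMeasurable Z ℙ := aemeasurable_of_map_neZero (by rw [hZ]; infer_instance)
  have hZm : ∀ m : ℕ, (∫ ω, Z ω ^ m) = gmom m := by
    intro m
    have h1 : ∫ x, x ^ m ∂(Measure.map Z ℙ) = ∫ ω, Z ω ^ m :=
      integral_map haeZ (measurable_id.pow_const m).aestronglyMeasurable
    rw [← h1, hZ, gauss_moment]
  set M : ℕ → ℝ := fun j => ∫ ω, Y ω ^ j with hM_def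
  set d : ℕ → ℝ := fun j =>
    (k.choose j : ℝ) * s ^ j * t ^ (k - j) * (M j - gmom j) * gmom (k - j) with hd_def
  -- the key decomposition
  have hdiff : ∀ m : ℕ, 3 ≤ m → m ≤ k →
      (∫ ω, (s * Y ω + t * Z ω) ^ m) - gmom m
        = (∑ j ∈ Finset.Ico 3 m,
            (m.choose j : ℝ) * s ^ j * t ^ (m - j) * (M j - gmom j) * gmom (m - j))
          + s ^ m * (M m - gmom m) := by
    intro m hm3 hmk
    have hW : ∫ ω, (s * Y ω + t * Z ω) ^ m
        = ∑ j ∈ range (m + 1), (m.choose j : ℝ) * s ^ j * t ^ (m - j) * M j * gmom (m - j) := by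
      rw [expand_indep Y Z hindep s t m (fun j hj => hYint j (hj.trans hmk))
        (fun j hj => hZint j (hj.trans hmk))]
      exact sum_congr rfl fun j _ => by rw [hZm]
    have hG : gmom m
        = ∑ j ∈ range (m + 1),
            (m.choose j : ℝ) * s ^ j * t ^ (m - j) * gmom j * gmom (m - j) :=
      (gmom_identity m (by rw [hs2]; ring)).symm
    have hsum : (∫ ω, (s * Y ω + t * Z ω) ^ m) - gmom m
        = ∑ j ∈ range (m + 1),
            (m.choose j : ℝ) * s ^ j * t ^ (m - j) * (M j - gmom j) * gmom (m - j) := by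
      rw [hW, hG, ← Finset.sum_sub_distrib]
      exact sum_congr rfl fun j _ => by ring
    have hM0 : M 0 = 1 := by simp [hM_def]
    have hM1 : M 1 - gmom 1 = 0 := by
      simp only [hM_def, pow_one, gmom_one]
      rw [hmean]; ring
    have hM2 : M 2 - gmom 2 = 0 := by
      have : gmom 2 = 1 := by
        have := gmom_rec 0
        rw [gmom_zero] at this
        simpa using this
      simp only [hM_def, this]
      rw [hvar]; ring
    have hzero : ∀ j ∈ range (m + 1), j ∉ Finset.Ico 3 (m + 1) →
        (m.choose j : ℝ) * s ^ j * t ^ (m - j) * (M j - gmom j) * gmom (m - j) = 0 := by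
      intro j hj hnj
      have hj3 : j < 3 := by
        simp only [Finset.mem_Ico, mem_range] at hj hnj
        omega
      interval_cases j
      · rw [hM0, gmom_zero]; ring
      · rw [hM1]; ring
      · rw [hM2]; ring
    have hsub : Finset.Ico 3 (m + 1) ⊆ range (m + 1) := by
      intro x hx
      simp only [Finset.mem_Ico] at hx
      simp [hx.2]
    rw [hsum, ← Finset.sum_subset hsub hzero, Finset.sum_Ico_succ_top hm3]
    congr 1
    rw [Nat.choose_self, Nat.sub_self, gmom_zero, pow_zero]
    push_cast
    ring
  -- rewrite hgap, hmin with gmom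
  rw [gauss_moment k] at hgap
  have hmin' : ∀ j < k, |M j - gmom j| < D := by
    intro j hj
    have := hmin j hj
    rwa [gauss_moment j] at this
  set c : ℝ := (k : ℝ) - 3 with hc_def
  have hc0 : 0 ≤ c := by
    have : (3 : ℝ) ≤ (k : ℝ) := by exact_mod_cast hk
    linarith
  -- bound on the remainder sum
  have hrest : |∑ j ∈ Finset.Ico 3 k, d j| ≤ D * t * s ^ 3 * (1 + Real.sqrt c) ^ k := by
    calc |∑ j ∈ Finset.Ico 3 k, d j| ≤ ∑ j ∈ Finset.Ico 3 k, |d j| :=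
          Finset.abs_sum_le_sum_abs _ _
      _ ≤ ∑ j ∈ Finset.Ico 3 k, (D * t * s ^ 3) * ((k.choose j : ℝ) * Real.sqrt c ^ (k - j)) := by
          refine Finset.sum_le_sum fun j hj => ?_
          obtain ⟨hj3, hjk⟩ := Finset.mem_Ico.mp hj
          have habs : |d j| = (k.choose j : ℝ) * s ^ j * t ^ (k - j) * |M j - gmom j|
              * gmom (k - j) := by
            rw [hd_def]
            simp only [abs_mul]
            rw [abs_of_nonneg (Nat.cast_nonneg _), abs_of_nonneg (pow_nonneg hs0 _),
              abs_of_nonneg (pow_nonneg ht0 _), abs_of_nonneg (gmom_nonneg _)]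
          rw [habs]
          have h1 : s ^ j ≤ s ^ 3 := pow_le_pow_of_le_one hs0 hs1 hj3
          have h2 : t ^ (k - j) ≤ t ^ 1 := pow_le_pow_of_le_one ht0 ht1 (by omega)
          have h3 : |M j - gmom j| ≤ D := (hmin' j hjk).le
          have h4 : gmom (k - j) ≤ Real.sqrt c ^ (k - j) := by
            apply gmom_le hc0
            rw [hc_def, Nat.cast_sub (le_of_lt hjk)]
            have : (3 : ℝ) ≤ (j : ℝ) := by exact_mod_cast hj3
            linarith
          calc (k.choose j : ℝ) * s ^ j * t ^ (k - j) * |M j - gmom j| * gmom (k - j)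
              ≤ (k.choose j : ℝ) * s ^ 3 * t ^ 1 * D * Real.sqrt c ^ (k - j) := by
                gcongr <;> first | positivity | exact gmom_nonneg _
            _ = (D * t * s ^ 3) * ((k.choose j : ℝ) * Real.sqrt c ^ (k - j)) := by ring
      _ = (D * t * s ^ 3) * ∑ j ∈ Finset.Ico 3 k, (k.choose j : ℝ) * Real.sqrt c ^ (k - j) := by
          rw [Finset.mul_sum]
      _ ≤ (D * t * s ^ 3) * (1 + Real.sqrt c) ^ k := by
          have hts : 0 ≤ D * t * s ^ 3 := by positivity
          refine mul_le_mul_of_nonneg_left ?_ hts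
          have hbin : (1 + Real.sqrt c) ^ k
              = ∑ j ∈ range (k + 1), (k.choose j : ℝ) * Real.sqrt c ^ (k - j) := by
            rw [add_pow]
            exact sum_congr rfl fun j _ => by rw [one_pow]; ring
          rw [hbin]
          refine Finset.sum_le_sum_of_subset_of_nonneg ?_ ?_
          · intro x hx
            obtain ⟨_, hxk⟩ := Finset.mem_Ico.mp hx
            simp [Nat.lt_succ_of_lt hxk]
          · intro i _ _
            positivity
      _ = D * t * s ^ 3 * (1 + Real.sqrt c) ^ k := by ring
  -- main term lower bound
  have hmain : D * s ^ k ≤ |s ^ k * (M k - gmom k)| := by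
    rw [abs_mul, abs_of_nonneg (pow_nonneg hs0 _)]
    calc D * s ^ k = s ^ k * D := by ring
      _ ≤ s ^ k * |M k - gmom k| := by
          exact mul_le_mul_of_nonneg_left hgap (pow_nonneg hs0 _)
  have hdk := hdiff k hk le_rfl
  -- rewrite goal's gaussian integral
  rw [gauss_moment k]
  constructor
  · -- part 1
    have key : |(∫ ω, (s * Y ω + t * Z ω) ^ k) - gmom k|
        ≥ D * s ^ k - D * t * s ^ 3 * (1 + Real.sqrt c) ^ k := by
      rw [hdk]
      have h1 : |s ^ k * (M k - gmom k)|
          ≤ |(∑ j ∈ Finset.Ico 3 k, d j) + s ^ k * (M k - gmom k)|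
            + |∑ j ∈ Finset.Ico 3 k, d j| := by
        have := abs_add_le ((∑ j ∈ Finset.Ico 3 k, d j) + s ^ k * (M k - gmom k))
          (-(∑ j ∈ Finset.Ico 3 k, d j))
        simp only [abs_neg] at this
        calc |s ^ k * (M k - gmom k)|
            = |((∑ j ∈ Finset.Ico 3 k, d j) + s ^ k * (M k - gmom k))
              + (-(∑ j ∈ Finset.Ico 3 k, d j))| := by congr 1; ring
          _ ≤ _ := this
      have h2 : ∑ j ∈ Finset.Ico 3 k,
          (k.choose j : ℝ) * s ^ j * t ^ (k - j) * (M j - gmom j) * gmom (k - j)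
            = ∑ j ∈ Finset.Ico 3 k, d j := rfl
      rw [h2]
      linarith [hmain, hrest]
    have hsk : (1 - t ^ 2) ^ ((k : ℝ) / 2) = s ^ k := rpow_half_nat h1t k
    have hs3 : (1 - t ^ 2) ^ ((3 : ℝ) / 2) = s ^ 3 := by
      have := rpow_half_nat h1t 3
      rw [← this]
      norm_num
    rw [hsk, hs3]
    calc D * (s ^ k - t * s ^ 3 * (1 + Real.sqrt ((k : ℝ) - 3)) ^ k)
        = D * s ^ k - D * t * s ^ 3 * (1 + Real.sqrt c) ^ k := by rw [← hc_def]; ring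
      _ ≤ _ := key
  · -- part 2 : k = 3
    intro hk3
    subst hk3
    rw [gauss_moment 3]
    have hdk3 := hdk
    rw [show Finset.Ico 3 3 = ∅ from Finset.Ico_self 3, Finset.sum_empty, zero_add] at hdk3
    have hs3 : (1 - t ^ 2) ^ ((3 : ℝ) / 2) = s ^ 3 := by
      have := rpow_half_nat h1t 3
      rw [← this]
      norm_num
    rw [hs3, hdk3, abs_mul, abs_of_nonneg (pow_nonneg hs0 _)]
    calc D * s ^ 3 = s ^ 3 * D := by ring
      _ ≤ s ^ 3 * |M 3 - gmom 3| := mul_le_mul_of_nonneg_left hgap (pow_nonneg hs0 _)
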